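/- Let n ≥ 1, let f : 2^[n] → ℝ be submodular with f(∅) = 0, and let γ be a fractional partition with respect to a finite family 𝓕 of nonempty subsets of [n]. Then Σ_{S ∈ 𝓕} γ(S)·f(S | S^c) ≤ f([n]) ≤ Σ_{S ∈ 𝓕} γ(S)·f(S). -/
import Mathlib

open Finset

private lemma tele_aux {n : ℕ} (F : Finset (Fin n) → ℝ) (S : Finset (Fin n)) :
    ∑ i ∈ S, (F (S ∩ Finset.Iic i) - F (S ∩ Finset.Iio i)) = F S - F ∅ := by
  induction S using Finset.strongInduction with
  | _ S ih =>
    rcases S.eq_empty_or_nonempty with rfl | hS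
    · simp
    · set m := S.max' hS with hm
      have hmS : m ∈ S := S.max'_mem hS
      have hlt : ∀ i ∈ S.erase m, i < m := by
        intro i hi
        exact lt_of_le_of_ne (S.le_max' i (Finset.mem_erase.mp hi).2)
          (Finset.mem_erase.mp hi).1
      have h1 : ∀ i ∈ S.erase m, S ∩ Finset.Iic i = S.erase m ∩ Finset.Iic i := by
        intro i hi
        ext x
        simp only [mem_inter, mem_erase, Finset.mem_Iic]
        constructor
        · rintro ⟨hx, hxi⟩
          refine ⟨⟨?_, hx⟩, hxi⟩
          rintro rfl
          exact absurd hxi (not_le.mpr (hlt i hi))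
        · rintro ⟨⟨_, hx⟩, hxi⟩; exact ⟨hx, hxi⟩
      have h2 : ∀ i ∈ S.erase m, S ∩ Finset.Iio i = S.erase m ∩ Finset.Iio i := by
        intro i hi
        ext x
        simp only [mem_inter, mem_erase, Finset.mem_Iio]
        constructor
        · rintro ⟨hx, hxi⟩
          refine ⟨⟨?_, hx⟩, hxi⟩
          rintro rfl
          exact absurd hxi (not_lt.mpr (le_of_lt (hlt i hi)))
        · rintro ⟨⟨_, hx⟩, hxi⟩; exact ⟨hx, hxi⟩
      have h3 : S ∩ Finset.Iic m = S := by
        ext x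
        simp only [mem_inter, Finset.mem_Iic]
        exact ⟨fun h => h.1, fun h => ⟨h, S.le_max' x h⟩⟩
      have h4 : S ∩ Finset.Iio m = S.erase m := by
        ext x
        simp only [mem_inter, Finset.mem_Iio, mem_erase]
        constructor
        · rintro ⟨hx, hxm⟩; exact ⟨ne_of_lt hxm, hx⟩
        · rintro ⟨hne, hx⟩; exact ⟨hx, lt_of_le_of_ne (S.le_max' x hx) hne⟩
      calc ∑ i ∈ S, (F (S ∩ Finset.Iic i) - F (S ∩ Finset.Iio i))
          = ∑ i ∈ S.erase m, (F (S ∩ Finset.Iic i) - F (S ∩ Finset.Iio i))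
            + (F (S ∩ Finset.Iic m) - F (S ∩ Finset.Iio m)) :=
            (Finset.sum_erase_add S _ hmS).symm
        _ = ∑ i ∈ S.erase m, (F (S.erase m ∩ Finset.Iic i) - F (S.erase m ∩ Finset.Iio i))
            + (F S - F (S.erase m)) := by
            rw [h3, h4]
            congr 1
            exact Finset.sum_congr rfl (fun i hi => by rw [h1 i hi, h2 i hi])
        _ = (F (S.erase m) - F ∅) + (F S - F (S.erase m)) := by
            rw [ih (S.erase m) (Finset.erase_ssubset hmS)]
        _ = F S - F ∅ := by ring

private lemma dim {n : ℕ} (f : Finset (Fin n) → ℝ)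
    (hsub : ∀ S T : Finset (Fin n), f S + f T ≥ f (S ∪ T) + f (S ∩ T))
    {A B : Finset (Fin n)} (hAB : A ⊆ B) {i : Fin n} (hi : i ∉ B) :
    f (insert i B) - f B ≤ f (insert i A) - f A := by
  have h := hsub (insert i A) B
  have h1 : insert i A ∪ B = insert i B := by
    ext x
    simp only [mem_union, mem_insert]
    constructor
    · rintro (⟨rfl | hx⟩ | hx)
      · tauto
      · exact Or.inr (hAB hx)
      · exact Or.inr hx
    · rintro (rfl | hx) <;> tauto
  have h2 : insert i A ∩ B = A := by
    ext x
    simp only [mem_inter, mem_insert]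
    constructor
    · rintro ⟨rfl | hx, hxB⟩
      · exact absurd hxB hi
      · exact hx
    · intro hx; exact ⟨Or.inr hx, hAB hx⟩
  rw [h1, h2] at h
  linarith

/-- weak form of the Madiman–Tetali inequalities. -/
theorem stmt_17 (n : ℕ) (hn : 1 ≤ n)
    (f : Finset (Fin n) → ℝ)
    (hsub : ∀ S T : Finset (Fin n), f S + f T ≥ f (S ∪ T) + f (S ∩ T))
    (hf0 : f ∅ = 0)
    (𝓕 : Finset (Finset (Fin n))) (h𝓕 : ∀ S ∈ 𝓕, S.Nonempty)
    (γ : Finset (Fin n) → ℝ) (hγ : ∀ S ∈ 𝓕, 0 ≤ γ S)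
    (hfrac : ∀ i : Fin n, ∑ S ∈ 𝓕.filter (fun S => i ∈ S), γ S = 1) :
    (∑ S ∈ 𝓕, γ S * (f (S ∪ Sᶜ) - f Sᶜ) ≤ f Finset.univ) ∧
      (f Finset.univ ≤ ∑ S ∈ 𝓕, γ S * f S) := by
  set g : Fin n → ℝ := fun i => f (Finset.Iic i) - f (Finset.Iio i) with hg
  -- total sum of g
  have hsumg : ∑ i : Fin n, g i = f Finset.univ := by
    have := tele_aux f (Finset.univ : Finset (Fin n))
    simp only [Finset.univ_inter, hf0, sub_zero] at this
    simpa [hg] using this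
  -- upper bound per set: ∑_{i ∈ S} g i ≤ f S
  have hupper : ∀ S : Finset (Fin n), ∑ i ∈ S, g i ≤ f S := by
    intro S
    have htel := tele_aux f S
    have hterm : ∀ i ∈ S, g i ≤ f (S ∩ Finset.Iic i) - f (S ∩ Finset.Iio i) := by
      intro i hiS
      have hins : S ∩ Finset.Iic i = insert i (S ∩ Finset.Iio i) := by
        ext x
        simp only [mem_inter, Finset.mem_Iic, mem_insert, Finset.mem_Iio]
        constructor
        · rintro ⟨hx, hxi⟩
          rcases lt_or_eq_of_le hxi with h | h
          · exact Or.inr ⟨hx, h⟩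
          · exact Or.inl h
        · rintro (rfl | ⟨hx, hxi⟩)
          · exact ⟨hiS, le_refl _⟩
          · exact ⟨hx, le_of_lt hxi⟩
      have hd := dim f hsub (A := S ∩ Finset.Iio i) (B := Finset.Iio i)
        (Finset.inter_subset_right) (by simp : i ∉ Finset.Iio i)
      rw [Finset.Iio_insert, ← hins] at hd
      simpa [hg] using hd
    calc ∑ i ∈ S, g i ≤ ∑ i ∈ S, (f (S ∩ Finset.Iic i) - f (S ∩ Finset.Iio i)) :=
          Finset.sum_le_sum hterm
      _ = f S - f ∅ := htel
      _ = f S := by rw [hf0]; ring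
  -- lower bound per set: f univ - f Sᶜ ≤ ∑_{i ∈ S} g i
  have hlower : ∀ S : Finset (Fin n), f Finset.univ - f Sᶜ ≤ ∑ i ∈ S, g i := by
    intro S
    have htel := tele_aux (fun T => f (Sᶜ ∪ T)) S
    simp only [Finset.union_empty] at htel
    have hSc : Sᶜ ∪ S = Finset.univ := by
      ext x; simp [em]
      tauto
    rw [hSc] at htel
    have hterm : ∀ i ∈ S, f (Sᶜ ∪ (S ∩ Finset.Iic i)) - f (Sᶜ ∪ (S ∩ Finset.Iio i)) ≤ g i := by
      intro i hiS
      set B := Sᶜ ∪ (S ∩ Finset.Iio i) with hB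
      have hiB : i ∉ B := by
        simp [hB, hiS]
      have hsubB : Finset.Iio i ⊆ B := by
        intro x hx
        simp only [Finset.mem_Iio] at hx
        by_cases hxS : x ∈ S
        · simp only [hB, mem_union, mem_inter, Finset.mem_Iio]
          exact Or.inr ⟨hxS, hx⟩
        · simp only [hB, mem_union, mem_compl]
          exact Or.inl hxS
      have hins : Sᶜ ∪ (S ∩ Finset.Iic i) = insert i B := by
        ext x
        simp only [hB, mem_union, mem_compl, mem_inter, Finset.mem_Iic, Finset.mem_Iio,
          mem_insert]
        constructor
        · rintro (hx | ⟨hxS, hxi⟩)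
          · tauto
          · rcases lt_or_eq_of_le hxi with h | h
            · exact Or.inr (Or.inr ⟨hxS, h⟩)
            · exact Or.inl h
        · rintro (rfl | hx | ⟨hxS, hxi⟩)
          · exact Or.inr ⟨hiS, le_refl _⟩
          · exact Or.inl hx
          · exact Or.inr ⟨hxS, le_of_lt hxi⟩
      have hd := dim f hsub (A := Finset.Iio i) (B := B) hsubB hiB
      rw [Finset.Iio_insert, ← hins] at hd
      simpa [hg] using hd
    calc f Finset.univ - f Sᶜ = ∑ i ∈ S, (f (Sᶜ ∪ (S ∩ Finset.Iic i)) - f (Sᶜ ∪ (S ∩ Finset.Iio i))) :=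
          htel.symm
      _ ≤ ∑ i ∈ S, g i := Finset.sum_le_sum hterm
  -- swap sums: ∑_{S ∈ 𝓕} γ S * ∑_{i ∈ S} g i = f univ
  have hswap : ∑ S ∈ 𝓕, γ S * ∑ i ∈ S, g i = f Finset.univ := by
    have : ∑ S ∈ 𝓕, γ S * ∑ i ∈ S, g i
        = ∑ S ∈ 𝓕, ∑ i : Fin n, (if i ∈ S then γ S * g i else 0) := by
      refine Finset.sum_congr rfl (fun S _ => ?_)
      rw [Finset.mul_sum, ← Finset.sum_filter]
      congr 1
      ext x
      simp
    rw [this, Finset.sum_comm]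
    calc ∑ i : Fin n, ∑ S ∈ 𝓕, (if i ∈ S then γ S * g i else 0)
        = ∑ i : Fin n, (∑ S ∈ 𝓕.filter (fun S => i ∈ S), γ S) * g i := by
          refine Finset.sum_congr rfl (fun i _ => ?_)
          rw [Finset.sum_mul, Finset.sum_filter]
      _ = ∑ i : Fin n, g i := by
          refine Finset.sum_congr rfl (fun i _ => ?_)
          rw [hfrac i, one_mul]
      _ = f Finset.univ := hsumg
  constructor
  · calc ∑ S ∈ 𝓕, γ S * (f (S ∪ Sᶜ) - f Sᶜ)
        ≤ ∑ S ∈ 𝓕, γ S * ∑ i ∈ S, g i := by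
          refine Finset.sum_le_sum (fun S hS => ?_)
          refine mul_le_mul_of_nonneg_left ?_ (hγ S hS)
          rw [Finset.union_compl]
          exact hlower S
      _ = f Finset.univ := hswap
  · calc f Finset.univ = ∑ S ∈ 𝓕, γ S * ∑ i ∈ S, g i := hswap.symm
      _ ≤ ∑ S ∈ 𝓕, γ S * f S := by
          refine Finset.sum_le_sum (fun S hS => ?_)
          exact mul_le_mul_of_nonneg_left (hupper S) (hγ S hS)
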